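/- In the clusters setting: let C ∈ 𝕊₊^d, let W(a₁),…,W(a_m) ∈ 𝕊₊^d satisfy (C^{1/2} W(a_i) C^{1/2})(C^{1/2} W(a_j) C^{1/2}) = 0 for i ≠ j, and let W_ρ = (1/m) Σ_{i=1}^m W(a_i). Then (1/m) Σ_{i=1}^m ‖C^{1/2} W(a_i)^{1/2}‖_* = (1/√m) ‖C^{1/2} W_ρ^{1/2}‖_*. -/

import Mathlib

open Matrix

open scoped ComplexOrder in
/-- The positive semidefinite square root of a positive semidefinite matrix
(the definition `Matrix.PosSemidef.sqrt` of the older Mathlib, since removed). -/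
noncomputable def Matrix.PosSemidef.sqrt {n 𝕜 : Type*} [Fintype n] [DecidableEq n] [RCLike 𝕜]
    {A : Matrix n n 𝕜} (hA : A.PosSemidef) : Matrix n n 𝕜 :=
  hA.1.eigenvectorUnitary.1 * diagonal ((↑) ∘ (√·) ∘ hA.1.eigenvalues) *
  (star hA.1.eigenvectorUnitary : Matrix n n 𝕜)

/-- The trace (nuclear) norm `‖M‖_* = Tr((Mᵀ M)^{1/2})`. -/
noncomputable def traceNorm {d : ℕ} (M : Matrix (Fin d) (Fin d) ℝ) : ℝ :=
  (Matrix.posSemidef_conjTranspose_mul_self M).sqrt.trace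

variable {d : ℕ}

lemma Matrix.PosSemidef.sqrt_eq_cfc_sqrt' {A : Matrix (Fin d) (Fin d) ℝ} (hA : A.PosSemidef) :
    open scoped MatrixOrder in hA.sqrt = CFC.sqrt A := by
  open scoped MatrixOrder in
  rw [CFC.sqrt_eq_cfc, cfc_nnreal_eq_real _ A hA.nonneg, hA.1.cfc_eq, IsHermitian.cfc,
    Unitary.conjStarAlgAut_apply]
  unfold Matrix.PosSemidef.sqrt
  congr 2
  ext i j
  simp only [diagonal_apply, Function.comp_apply, Real.coe_sqrt,
    Real.coe_toNNReal _ (hA.eigenvalues_nonneg _)]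

lemma Matrix.PosSemidef.posSemidef_sqrt {A : Matrix (Fin d) (Fin d) ℝ} (hA : A.PosSemidef) :
    hA.sqrt.PosSemidef := by
  open scoped MatrixOrder in
  rw [hA.sqrt_eq_cfc_sqrt']; exact (CFC.sqrt_nonneg A).posSemidef

lemma Matrix.PosSemidef.sqrt_mul_self {A : Matrix (Fin d) (Fin d) ℝ} (hA : A.PosSemidef) :
    hA.sqrt * hA.sqrt = A := by
  open scoped MatrixOrder in
  rw [hA.sqrt_eq_cfc_sqrt']; exact CFC.sqrt_mul_sqrt_self A hA.nonneg

lemma Matrix.PosSemidef.sq_sqrt {A : Matrix (Fin d) (Fin d) ℝ} (hA : A.PosSemidef) :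
    hA.sqrt ^ 2 = A := by
  rw [sq, hA.sqrt_mul_self]

lemma Matrix.PosSemidef.eq_sqrt_of_sq_eq {A B : Matrix (Fin d) (Fin d) ℝ} (hA : A.PosSemidef)
    (hB : B.PosSemidef) (h : A ^ 2 = B) : A = hB.sqrt := by
  open scoped MatrixOrder in
  rw [hB.sqrt_eq_cfc_sqrt', ← h, CFC.sqrt_sq A hA.nonneg]

lemma sqrt_congr' {A B : Matrix (Fin d) (Fin d) ℝ} (h : A = B)
    (hA : A.PosSemidef) (hB : B.PosSemidef) : hA.sqrt = hB.sqrt := by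
  subst h; rfl

/-- Key lemma: `Tr √(MᴴM) = Tr √(MMᴴ)` for a square real matrix. -/
lemma trace_sqrt_comm (M : Matrix (Fin d) (Fin d) ℝ) :
    (Matrix.posSemidef_conjTranspose_mul_self M).sqrt.trace =
      (Matrix.posSemidef_self_mul_conjTranspose M).sqrt.trace := by
  set h := (Matrix.posSemidef_conjTranspose_mul_self M) with hh
  set U : Matrix (Fin d) (Fin d) ℝ := (h.1.eigenvectorUnitary : Matrix (Fin d) (Fin d) ℝ) with hU
  set lam : Fin d → ℝ := h.1.eigenvalues with hlam
  have hUU : star U * U = 1 := Matrix.mem_unitaryGroup_iff'.mp (h.1.eigenvectorUnitary).2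
  have hUU' : U * star U = 1 := Matrix.mem_unitaryGroup_iff.mp (h.1.eigenvectorUnitary).2
  have hofReal : (RCLike.ofReal ∘ lam : Fin d → ℝ) = lam := by funext i; simp
  have hspec : Mᴴ * M = U * diagonal lam * star U := by
    have := h.1.spectral_theorem
    rwa [hofReal] at this
  have hlam0 : ∀ i, 0 ≤ lam i := h.eigenvalues_nonneg
  set e : Fin d → ℝ := fun i => if lam i = 0 then 0 else (Real.sqrt (lam i))⁻¹ with he
  set eps : Fin d → ℝ := fun i => if lam i = 0 then 0 else 1 with heps
  have hdiag : star U * (Mᴴ * M) * U = diagonal lam := by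
    rw [hspec]
    simp only [← mul_assoc]
    rw [hUU, one_mul, mul_assoc, hUU, mul_one]
  set Q : Matrix (Fin d) (Fin d) ℝ := M * (U * diagonal e * star U) * Mᴴ with hQ
  have hQpsd : Q.PosSemidef := by
    apply Matrix.PosSemidef.mul_mul_conjTranspose_same _ M
    apply Matrix.PosSemidef.mul_mul_conjTranspose_same _ U
    refine posSemidef_diagonal_iff.mpr fun i => ?_
    by_cases hi : lam i = 0 <;> simp [he, hi, Real.sqrt_nonneg, inv_nonneg.mpr]
  have hG : M * (U * diagonal (fun i => 1 - eps i)) = 0 := by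
    rw [← Matrix.conjTranspose_mul_self_eq_zero]
    have key : (M * (U * diagonal fun i => 1 - eps i))ᴴ * (M * (U * diagonal fun i => 1 - eps i))
        = diagonal (fun i => 1 - eps i) * (star U * (Mᴴ * M) * U) *
            diagonal (fun i => 1 - eps i) := by
      simp only [conjTranspose_mul, Matrix.diagonal_conjTranspose]
      have hds : (star fun i => 1 - eps i) = fun i => 1 - eps i := by funext i; simp
      rw [hds]
      have hstarU : (U)ᴴ = star U := rfl
      rw [hstarU]
      noncomm_ring
    rw [key, hdiag, diagonal_mul_diagonal, diagonal_mul_diagonal]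
    have hfun : (fun i => (1 - eps i) * lam i * (1 - eps i)) = (fun _ => (0:ℝ)) := by
      funext i
      by_cases hi : lam i = 0 <;> simp [heps, hi]
    rw [hfun, Matrix.diagonal_zero]
  have h1 : diagonal eps + diagonal (fun i => 1 - eps i) = 1 := by
    rw [diagonal_add, ← Matrix.diagonal_one]
    congr 1
    funext i
    simp
  have hMUF : M * U * diagonal eps = M * U := by
    calc M * U * diagonal eps
        = M * U * diagonal eps + M * (U * diagonal fun i => 1 - eps i) := by
          rw [hG, add_zero]
      _ = M * U * (diagonal eps + diagonal fun i => 1 - eps i) := by noncomm_ring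
      _ = M * U := by rw [h1, mul_one]
  have hfe : (fun i => e i * lam i * e i) = eps := by
    funext i
    by_cases hi : lam i = 0
    · simp [he, heps, hi]
    · have hpos : 0 < lam i := lt_of_le_of_ne (hlam0 i) (Ne.symm hi)
      have hs : Real.sqrt (lam i) ≠ 0 := Real.sqrt_ne_zero'.mpr hpos
      have hmul : (Real.sqrt (lam i))⁻¹ * lam i * (Real.sqrt (lam i))⁻¹ = 1 := by
        rw [← Real.mul_self_sqrt (hlam0 i)]
        field_simp
        rw [Real.sqrt_sq (Real.sqrt_nonneg _)]
      simp [he, heps, hi, hmul]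
  have hQsq : Q ^ 2 = M * Mᴴ := by
    have step1 : Q * Q
        = M * U * (diagonal e * (star U * (Mᴴ * M) * U) * diagonal e) * star U * Mᴴ := by
      rw [hQ]; noncomm_ring
    rw [pow_two, step1, hdiag, diagonal_mul_diagonal, diagonal_mul_diagonal, hfe, hMUF,
      mul_assoc M U (star U), hUU', mul_one]
  have hQeq : Q = (Matrix.posSemidef_self_mul_conjTranspose M).sqrt :=
    hQpsd.eq_sqrt_of_sq_eq _ hQsq
  have htrQ : Q.trace = ∑ i, Real.sqrt (lam i) := by
    have t1 : Q.trace = ((star U * (Mᴴ * M) * U) * diagonal e).trace := by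
      rw [hQ, show M * (U * diagonal e * star U) * Mᴴ
          = (M * U * diagonal e) * (star U * Mᴴ) by noncomm_ring,
        Matrix.trace_mul_comm]
      congr 1
      noncomm_ring
    rw [t1, hdiag, diagonal_mul_diagonal, Matrix.trace_diagonal]
    congr 1
    funext i
    by_cases hi : lam i = 0
    · simp [he, hi]
    · have hpos : 0 < lam i := lt_of_le_of_ne (hlam0 i) (Ne.symm hi)
      have hs : Real.sqrt (lam i) ≠ 0 := Real.sqrt_ne_zero'.mpr hpos
      have : lam i * (Real.sqrt (lam i))⁻¹ = Real.sqrt (lam i) := by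
        rw [← Real.mul_self_sqrt (hlam0 i)]
        field_simp
        rw [Real.sqrt_sq (Real.sqrt_nonneg _)]
      simp [he, hi, this]
  have htrP : h.sqrt.trace = ∑ i, Real.sqrt (lam i) := by
    rw [Matrix.PosSemidef.sqrt, Matrix.trace_mul_cycle, ← hU, hUU, one_mul,
      Matrix.trace_diagonal]
    simp
    rfl
  rw [htrP, ← hQeq, htrQ]


lemma psd_smul' {A : Matrix (Fin d) (Fin d) ℝ} (hA : A.PosSemidef) {c : ℝ} (hc : 0 ≤ c) :
    (c • A).PosSemidef := by
  refine ⟨?_, fun x => ?_⟩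
  · unfold Matrix.IsHermitian
    rw [Matrix.conjTranspose_smul, hA.1]
    simp
  · exact (hA.smul hc).2 x

lemma sqrt_orth {A B : Matrix (Fin d) (Fin d) ℝ} (hA : A.PosSemidef) (hB : B.PosSemidef)
    (hAB : A * B = 0) (hBA : B * A = 0) : hA.sqrt * hB.sqrt = 0 := by
  have h1 : hA.sqrt * B = 0 := by
    rw [← Matrix.conjTranspose_mul_self_eq_zero]
    have : (hA.sqrt * B)ᴴ * (hA.sqrt * B) = B * A * B := by
      rw [conjTranspose_mul, hB.1, hA.posSemidef_sqrt.1]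
      rw [show B * hA.sqrt * (hA.sqrt * B) = B * (hA.sqrt * hA.sqrt) * B by noncomm_ring,
        hA.sqrt_mul_self]
    rw [this, hBA, Matrix.zero_mul]
  rw [← Matrix.self_mul_conjTranspose_eq_zero]
  have : (hA.sqrt * hB.sqrt) * (hA.sqrt * hB.sqrt)ᴴ = hA.sqrt * B * hA.sqrt := by
    rw [conjTranspose_mul, hB.posSemidef_sqrt.1, hA.posSemidef_sqrt.1]
    rw [show hA.sqrt * hB.sqrt * (hB.sqrt * hA.sqrt)
        = hA.sqrt * (hB.sqrt * hB.sqrt) * hA.sqrt by noncomm_ring, hB.sqrt_mul_self]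
  rw [this, h1, Matrix.zero_mul]

/-- traceNorm of `c * w` where `c, w` hermitian psd square roots: equals trace of sqrt of `c*W*c`. -/
lemma traceNorm_eq {C W : Matrix (Fin d) (Fin d) ℝ} (hC : C.PosSemidef) (hW : W.PosSemidef)
    (hCW : (hC.sqrt * W * hC.sqrt).PosSemidef) :
    traceNorm (hC.sqrt * hW.sqrt) = hCW.sqrt.trace := by
  rw [traceNorm, trace_sqrt_comm]
  congr 1
  apply sqrt_congr'
  rw [conjTranspose_mul, hW.posSemidef_sqrt.1, hC.posSemidef_sqrt.1,
    show hC.sqrt * hW.sqrt * (hW.sqrt * hC.sqrt)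
      = hC.sqrt * (hW.sqrt * hW.sqrt) * hC.sqrt by noncomm_ring, hW.sqrt_mul_self]


/-- Clusters setting: if `(C^{1/2} W(aᵢ) C^{1/2})(C^{1/2} W(aⱼ) C^{1/2}) = 0` for `i ≠ j`
and `W_ρ = (1/m) Σᵢ W(aᵢ)`, then
`(1/m) Σᵢ ‖C^{1/2} W(aᵢ)^{1/2}‖_* = (1/√m) ‖C^{1/2} W_ρ^{1/2}‖_*`. -/
theorem stmt9 {d m : ℕ} (hm : 0 < m)
    (C : Matrix (Fin d) (Fin d) ℝ) (hC : C.PosSemidef)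
    (W : Fin m → Matrix (Fin d) (Fin d) ℝ) (hW : ∀ i, (W i).PosSemidef)
    (horth : ∀ i j, i ≠ j →
      (hC.sqrt * W i * hC.sqrt) * (hC.sqrt * W j * hC.sqrt) = 0)
    (Wρ : Matrix (Fin d) (Fin d) ℝ) (hWρdef : Wρ = (m : ℝ)⁻¹ • ∑ i, W i)
    (hWρ : Wρ.PosSemidef) :
    (m : ℝ)⁻¹ * ∑ i, traceNorm (hC.sqrt * (hW i).sqrt) =
      (Real.sqrt m)⁻¹ * traceNorm (hC.sqrt * hWρ.sqrt) := by
  have hcH : (hC.sqrt)ᴴ = hC.sqrt := hC.posSemidef_sqrt.1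
  -- the matrices A i = C^{1/2} W i C^{1/2}
  set A : Fin m → Matrix (Fin d) (Fin d) ℝ := fun i => hC.sqrt * W i * hC.sqrt with hAdef
  have hA : ∀ i, (A i).PosSemidef := fun i => by
    have := (hW i).mul_mul_conjTranspose_same hC.sqrt
    rwa [hcH] at this
  set s : Fin m → Matrix (Fin d) (Fin d) ℝ := fun i => (hA i).sqrt with hsdef
  -- sum is PSD
  have hS : (∑ i, A i).PosSemidef :=
    Finset.sum_induction A Matrix.PosSemidef (fun a b ha hb => ha.add hb)
      (Matrix.PosSemidef.zero) (fun i _ => hA i)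
  have hssum : (∑ i, s i).PosSemidef :=
    Finset.sum_induction s Matrix.PosSemidef (fun a b ha hb => ha.add hb)
      (Matrix.PosSemidef.zero) (fun i _ => (hA i).posSemidef_sqrt)
  -- sqrt of sum
  have horth' : ∀ i j, i ≠ j → s i * s j = 0 := fun i j hij =>
    sqrt_orth (hA i) (hA j) (horth i j hij) (horth j i (Ne.symm hij))
  have hsq : (∑ i, s i) ^ 2 = ∑ i, A i := by
    rw [pow_two, Finset.sum_mul_sum]
    rw [Finset.sum_congr rfl (fun i _ => Finset.sum_eq_single i
      (fun j _ hj => horth' i j (Ne.symm hj)) (by simp))]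
    exact Finset.sum_congr rfl fun i _ => (hA i).sqrt_mul_self
  have hSsqrt : hS.sqrt = ∑ i, s i := (hssum.eq_sqrt_of_sq_eq hS hsq).symm
  -- C^{1/2} Wρ C^{1/2}
  have hCWρ : (hC.sqrt * Wρ * hC.sqrt).PosSemidef := by
    have := hWρ.mul_mul_conjTranspose_same hC.sqrt
    rwa [hcH] at this
  have hWρeq : hC.sqrt * Wρ * hC.sqrt = (m : ℝ)⁻¹ • ∑ i, A i := by
    rw [hWρdef, Matrix.mul_smul, Matrix.smul_mul, Finset.mul_sum, Finset.sum_mul]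
  -- sqrt of the scaled sum
  have hmnn : (0:ℝ) ≤ (m : ℝ)⁻¹ := by positivity
  have hT : ((Real.sqrt ((m:ℝ)⁻¹)) • hS.sqrt).PosSemidef :=
    psd_smul' hS.posSemidef_sqrt (Real.sqrt_nonneg _)
  have hTsq : ((Real.sqrt ((m:ℝ)⁻¹)) • hS.sqrt) ^ 2 = (m : ℝ)⁻¹ • ∑ i, A i := by
    rw [smul_pow, Real.sq_sqrt hmnn, hS.sq_sqrt]
  have hsmulpsd : ((m : ℝ)⁻¹ • ∑ i, A i).PosSemidef := psd_smul' hS hmnn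
  have hTs : hsmulpsd.sqrt = (Real.sqrt ((m:ℝ)⁻¹)) • hS.sqrt :=
    (hT.eq_sqrt_of_sq_eq hsmulpsd hTsq).symm
  -- both sides
  have lhs : ∀ i, traceNorm (hC.sqrt * (hW i).sqrt) = (s i).trace := fun i =>
    traceNorm_eq hC (hW i) (hA i)
  have rhs : traceNorm (hC.sqrt * hWρ.sqrt) = Real.sqrt ((m:ℝ)⁻¹) * ∑ i, (s i).trace := by
    rw [traceNorm_eq hC hWρ hCWρ, sqrt_congr' hWρeq hCWρ hsmulpsd, hTs, Matrix.trace_smul,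
      hSsqrt, Matrix.trace_sum, smul_eq_mul]
  rw [rhs, Finset.sum_congr rfl fun i _ => lhs i]
  rw [← mul_assoc]
  congr 1
  rw [Real.sqrt_inv, ← mul_inv, Real.mul_self_sqrt (Nat.cast_nonneg m)]
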